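/- arXiv:2511.11398 — 2 statements merged into one kernel-verified Lean document; each statement's English description precedes it below -/
import Mathlib

section
/- Fix κ ≥ 1, λ ∈ ℂ, r = (r_1,…,r_κ) ∈ ℂ^κ, K ≥ 0, and a complex polynomial L(ζ) such that L(λ+⟨k,r⟩) ≠ 0 for every k ∈ ℤ₊^κ∖{0}, where ⟨k,r⟩ = k_1 r_1+…+k_κ r_κ and |k| = k_1+…+k_κ. Let c : ℤ₊^κ∖{0} → ℂ[t] be a family of polynomials such that for every m ∈ ℤ₊^κ∖{0}, the polynomial L(λ+⟨m,r⟩ + d/dt) c_m (i.e. Σ_j A_j Δ_m^j c_m where Δ_m v = (λ+⟨m,r⟩)v + v' and L(ζ) = Σ_j A_j ζ^j) equals a finite sum of terms, each of the form β(t)·Π_{i=1}^{p} (Δ_{k_i})^{j_i} c_{k_i} with p ≥ 0, j_i ∈ ℕ, β ∈ ℂ[t], multi-indices k_1,…,k_p ∈ ℤ₊^κ∖{0} satisfying k_1+…+k_p ≤ m componentwise and |k_1|+…+|k_p| < |m|, and deg β ≤ K·(|m| − |k_1| − … − |k_p|). Then deg c_m ≤ K·|m| for every m ∈ ℤ₊^κ∖{0}.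 -/
/-- `|m| = m_1 + … + m_κ` for a multi-index `m`. -/
def msize {κ : ℕ} (m : Fin κ → ℕ) : ℕ := ∑ i, m i

/-- `⟨m,r⟩ = m_1 r_1 + … + m_κ r_κ`. -/
noncomputable def mdot {κ : ℕ} (r : Fin κ → ℂ) (m : Fin κ → ℕ) : ℂ := ∑ i, (m i : ℂ) * r i

/-- The operator `Δ_k v = (λ+⟨k,r⟩)·v + dv/dt` on `ℂ[t]`. -/
noncomputable def DeltaOp {κ : ℕ} (lam : ℂ) (r : Fin κ → ℂ) (k : Fin κ → ℕ)
    (v : Polynomial ℂ) : Polynomial ℂ :=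
  Polynomial.C (lam + mdot r k) * v + Polynomial.derivative v

lemma delta_natDegree_le {κ : ℕ} (lam : ℂ) (r : Fin κ → ℂ) (k : Fin κ → ℕ)
    (v : Polynomial ℂ) : (DeltaOp lam r k v).natDegree ≤ v.natDegree := by
  unfold DeltaOp
  refine (Polynomial.natDegree_add_le _ _).trans (max_le ?_ ?_)
  · exact Polynomial.natDegree_C_mul_le _ _
  · exact (Polynomial.natDegree_derivative_le v).trans (Nat.sub_le _ _)

lemma delta_iter_natDegree_le {κ : ℕ} (lam : ℂ) (r : Fin κ → ℂ) (k : Fin κ → ℕ)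
    (j : ℕ) (v : Polynomial ℂ) : ((DeltaOp lam r k)^[j] v).natDegree ≤ v.natDegree := by
  induction j generalizing v with
  | zero => simp
  | succ j ih =>
    rw [Function.iterate_succ_apply]
    exact (ih _).trans (delta_natDegree_le lam r k v)

lemma delta_iter_coeff {κ : ℕ} (lam : ℂ) (r : Fin κ → ℂ) (k : Fin κ → ℕ)
    (j : ℕ) (v : Polynomial ℂ) {n : ℕ} (hn : v.natDegree ≤ n) :
    ((DeltaOp lam r k)^[j] v).coeff n = (lam + mdot r k) ^ j * v.coeff n := by
  induction j generalizing v with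
  | zero => simp
  | succ j ih =>
    rw [Function.iterate_succ_apply, ih _ ((delta_natDegree_le lam r k v).trans hn)]
    have h1 : (Polynomial.derivative v).coeff n = 0 := by
      rcases Nat.lt_or_ge v.natDegree 1 with h | h
      · rw [Polynomial.coeff_derivative]
        rw [Polynomial.coeff_eq_zero_of_natDegree_lt (by omega)]
        ring
      · rw [Polynomial.coeff_derivative,
          Polynomial.coeff_eq_zero_of_natDegree_lt (by omega)]
        ring
    rw [DeltaOp, Polynomial.coeff_add, Polynomial.coeff_C_mul, h1]
    ring

lemma L_apply_coeff {κ : ℕ} (lam : ℂ) (r : Fin κ → ℂ) (k : Fin κ → ℕ)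
    (L : Polynomial ℂ) (v : Polynomial ℂ) {n : ℕ} (hn : v.natDegree ≤ n) :
    (∑ j ∈ Finset.range (L.natDegree + 1),
        L.coeff j • (DeltaOp lam r k)^[j] v).coeff n =
      L.eval (lam + mdot r k) * v.coeff n := by
  rw [Polynomial.finset_sum_coeff]
  have : ∀ j ∈ Finset.range (L.natDegree + 1),
      (L.coeff j • (DeltaOp lam r k)^[j] v).coeff n
        = (L.coeff j * (lam + mdot r k) ^ j) * v.coeff n := by
    intro j _
    rw [Polynomial.coeff_smul, delta_iter_coeff lam r k j v hn, smul_eq_mul]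
    ring
  rw [Finset.sum_congr rfl this, ← Finset.sum_mul,
    ← Polynomial.eval_eq_sum_range]

/-- Lemma 4 (inductive degree estimate): if for every `m ≠ 0` the polynomial
`L(λ+⟨m,r⟩+d/dt) c_m` is a finite sum of terms `β(t)·Π_i Δ_{k_i}^{j_i} c_{k_i}` with
nonzero multi-indices `k_i`, `k_1+…+k_p ≤ m` componentwise, `|k_1|+…+|k_p| < |m|` and
`deg β ≤ K(|m|−Σ|k_i|)`, and `L(λ+⟨m,r⟩) ≠ 0` for all `m ≠ 0`, then
`deg c_m ≤ K·|m|` for all `m ≠ 0`. -/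
theorem degree_estimate (κ : ℕ) (hκ : 1 ≤ κ) (lam : ℂ) (r : Fin κ → ℂ)
    (K : ℝ) (hK : 0 ≤ K) (L : Polynomial ℂ)
    (hL : ∀ k : Fin κ → ℕ, k ≠ 0 → L.eval (lam + mdot r k) ≠ 0)
    (c : (Fin κ → ℕ) → Polynomial ℂ)
    (hrec : ∀ m : Fin κ → ℕ, m ≠ 0 →
      ∃ terms : List (Polynomial ℂ × List ((Fin κ → ℕ) × ℕ)),
        (∑ j ∈ Finset.range (L.natDegree + 1),
            L.coeff j • (DeltaOp lam r m)^[j] (c m)) =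
          (terms.map fun t =>
            t.1 * (t.2.map fun kj => (DeltaOp lam r kj.1)^[kj.2] (c kj.1)).prod).sum ∧
        ∀ t ∈ terms,
          (∀ kj ∈ t.2, kj.1 ≠ (0 : Fin κ → ℕ)) ∧
          (t.2.map fun kj => kj.1).sum ≤ m ∧
          ((t.2.map fun kj => msize kj.1).sum < msize m) ∧
          ((t.1.natDegree : ℝ) ≤
            K * ((msize m : ℝ) - ((t.2.map fun kj => msize kj.1).sum : ℝ)))) :
    ∀ m : Fin κ → ℕ, m ≠ 0 → ((c m).natDegree : ℝ) ≤ K * msize m := by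
  suffices H : ∀ N : ℕ, ∀ m : Fin κ → ℕ, m ≠ 0 → msize m ≤ N →
      ((c m).natDegree : ℝ) ≤ K * msize m by
    intro m hm; exact H (msize m) m hm le_rfl
  intro N
  induction N with
  | zero =>
    intro m hm hle
    exfalso
    apply hm
    funext i
    have : msize m = 0 := Nat.le_zero.mp hle
    have := (Finset.sum_eq_zero_iff).mp this i (Finset.mem_univ i)
    simpa using this
  | succ N ih =>
    intro m hm hle
    by_cases hcm : c m = 0
    · simp only [hcm, Polynomial.natDegree_zero, Nat.cast_zero]
      positivity
    obtain ⟨terms, heq, hterms⟩ := hrec m hm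
    set n := (c m).natDegree with hn
    -- bound the degree of each term on the RHS
    have hterm_deg : ∀ t ∈ terms,
        (((t.1 * (t.2.map fun kj =>
          (DeltaOp lam r kj.1)^[kj.2] (c kj.1)).prod).natDegree : ℝ)) ≤ K * msize m := by
      intro t ht
      obtain ⟨hne0, -, hlt, hβ⟩ := hterms t ht
      set S : ℕ := (t.2.map fun kj => msize kj.1).sum with hS
      -- IH applies to each k in t.2
      have hIH : ∀ kj ∈ t.2, (((c kj.1).natDegree : ℝ)) ≤ K * msize kj.1 := by
        intro kj hkj
        have hmem : msize kj.1 ∈ (t.2.map fun kj => msize kj.1) :=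
          List.mem_map_of_mem hkj
        have hle1 : msize kj.1 ≤ S := List.le_sum_of_mem hmem
        exact ih kj.1 (hne0 kj hkj) (by omega)
      have h1 : (t.1 * (t.2.map fun kj =>
          (DeltaOp lam r kj.1)^[kj.2] (c kj.1)).prod).natDegree ≤
          t.1.natDegree + (t.2.map fun kj => ((DeltaOp lam r kj.1)^[kj.2]
            (c kj.1)).natDegree).sum := by
        refine (Polynomial.natDegree_mul_le).trans (Nat.add_le_add_left ?_ _)
        refine (Polynomial.natDegree_list_prod_le _).trans ?_
        rw [List.map_map]
        rfl
      have h2 : ((t.2.map fun kj => ((DeltaOp lam r kj.1)^[kj.2]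
            (c kj.1)).natDegree).sum : ℝ) ≤ K * (S : ℝ) := by
        have : ((t.2.map fun kj => ((DeltaOp lam r kj.1)^[kj.2]
            (c kj.1)).natDegree).sum : ℝ)
            = (t.2.map fun kj => (((DeltaOp lam r kj.1)^[kj.2]
              (c kj.1)).natDegree : ℝ)).sum := by
          rw [Nat.cast_list_sum, List.map_map]; rfl
        rw [this]
        have hle2 : (t.2.map fun kj => (((DeltaOp lam r kj.1)^[kj.2]
              (c kj.1)).natDegree : ℝ)).sum ≤
            (t.2.map fun kj => K * (msize kj.1 : ℝ)).sum := by
          refine List.sum_le_sum ?_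
          intro kj hkj
          calc (((DeltaOp lam r kj.1)^[kj.2] (c kj.1)).natDegree : ℝ)
              ≤ ((c kj.1).natDegree : ℝ) := by
                exact_mod_cast delta_iter_natDegree_le lam r kj.1 kj.2 (c kj.1)
            _ ≤ K * msize kj.1 := hIH kj hkj
        refine hle2.trans (le_of_eq ?_)
        have : (t.2.map fun kj => K * (msize kj.1 : ℝ)).sum
            = K * (t.2.map fun kj => (msize kj.1 : ℝ)).sum := by
          induction t.2 with
          | nil => simp
          | cons a l ihl => simp [ihl, mul_add]
        rw [this]
        congr 1
        rw [hS, Nat.cast_list_sum, List.map_map]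
        rfl
      calc ((t.1 * (t.2.map fun kj =>
            (DeltaOp lam r kj.1)^[kj.2] (c kj.1)).prod).natDegree : ℝ)
          ≤ (t.1.natDegree : ℝ) + ((t.2.map fun kj => ((DeltaOp lam r kj.1)^[kj.2]
              (c kj.1)).natDegree).sum : ℝ) := by exact_mod_cast h1
        _ ≤ K * ((msize m : ℝ) - (S : ℝ)) + K * (S : ℝ) := add_le_add hβ h2
        _ = K * msize m := by ring
    -- the LHS has a nonzero coefficient in degree n
    have hco : (∑ j ∈ Finset.range (L.natDegree + 1),
        L.coeff j • (DeltaOp lam r m)^[j] (c m)).coeff n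
          = L.eval (lam + mdot r m) * (c m).coeff n :=
      L_apply_coeff lam r m L (c m) le_rfl
    have hne : (∑ j ∈ Finset.range (L.natDegree + 1),
        L.coeff j • (DeltaOp lam r m)^[j] (c m)).coeff n ≠ 0 := by
      rw [hco]
      exact mul_ne_zero (hL m hm) (Polynomial.leadingCoeff_ne_zero.mpr hcm)
    by_contra hgt
    push_neg at hgt
    apply hne
    rw [heq]
    have key : ∀ (l : List (Polynomial ℂ)),
        (l.sum).coeff n = (l.map (fun p => p.coeff n)).sum := by
      intro l
      induction l with
      | nil => simp
      | cons a l ihl => simp [ihl]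
    rw [key]
    apply List.sum_eq_zero
    intro x hx
    rw [List.mem_map] at hx
    obtain ⟨p, hp, rfl⟩ := hx
    rw [List.mem_map] at hp
    obtain ⟨t, ht, rfl⟩ := hp
    apply Polynomial.coeff_eq_zero_of_natDegree_lt
    have := hterm_deg t ht
    exact_mod_cast this.trans_lt hgt
end

section
/- Fix κ ≥ 1, r = (r_1,…,r_κ) ∈ ℂ^κ with Re r_i > 0 for all i, real numbers s > 0 and 𝒦 ≥ 0, λ ∈ ℂ with Re λ > 0, and a complex polynomial L(ζ) = Σ_{j=0}^{ℓ} A_j ζ^j with A_ℓ ≠ 0 such that L(λ+⟨m,r⟩) ≠ 0 for every m ∈ ℤ₊^κ∖{0}, where ⟨m,r⟩ = m_1 r_1+…+m_κ r_κ and |m| = m_1+…+m_κ. Set θ = sup_{m ∈ ℤ₊^κ∖{0}} |m|/|λ+⟨m,r⟩| (finite since Re(λ+⟨m,r⟩) ≥ (min_i Re r_i)·|m|), and let R > max(1, 𝒦θ). For a complex polynomial C(t) = Σ_i a_i t^i set ‖C‖_R = Σ_i |a_i| R^i, and for j ∈ ℕ let H^j be the set of families η = (C_m)_{m ∈ ℤ₊^κ∖{0}}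 of polynomials with deg C_m ≤ 𝒦|m| and ‖η‖_j := Σ_m (|λ+⟨m,r⟩| + 𝒦|m|)^j / |Γ(⟨m,r⟩/s)| · ‖C_m‖_R < ∞. Then there exists α' > 0 such that for every family (b_m) ∈ H^0 there is a unique family (v_m) of complex polynomials with L(λ+⟨m,r⟩+d/dt) v_m = b_m for all m (the operator being Σ_j A_j (Δ_m)^j with Δ_m v = (λ+⟨m,r⟩)v + v'), this family satisfies deg v_m = deg b_m ≤ 𝒦|m|, belongs to H^ℓ, and ‖(v_m)‖_ℓ ≤ α'·‖(b_m)‖_0. -/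
/-- The weighted `ℓ¹`-norm on complex polynomials. -/
noncomputable def normR (R : ℝ) (C : Polynomial ℂ) : ℝ :=
  ∑ i ∈ C.support, ‖C.coeff i‖ * R ^ i

/-- The Gamma-weighted norm `‖η‖_j`. -/
noncomputable def normJ {κ : ℕ} (r : Fin κ → ℂ) (s R 𝒦 : ℝ) (lam : ℂ) (j : ℕ)
    (η : (Fin κ → ℕ) → Polynomial ℂ) : ℝ :=
  ∑' m : {m : Fin κ → ℕ // m ≠ 0},
    (‖lam + mdot r m.1‖ + 𝒦 * msize m.1) ^ j /
      ‖Complex.Gamma (mdot r m.1 / (s : ℂ))‖ * normR R (η m.1)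

/-- Membership in the space `H^j`. -/
def memHJ {κ : ℕ} (r : Fin κ → ℂ) (s R 𝒦 : ℝ) (lam : ℂ) (j : ℕ)
    (η : (Fin κ → ℕ) → Polynomial ℂ) : Prop :=
  η 0 = 0 ∧ (∀ m : Fin κ → ℕ, ((η m).natDegree : ℝ) ≤ 𝒦 * msize m) ∧
  Summable (fun m : {m : Fin κ → ℕ // m ≠ 0} =>
    (‖lam + mdot r m.1‖ + 𝒦 * msize m.1) ^ j /
      ‖Complex.Gamma (mdot r m.1 / (s : ℂ))‖ * normR R (η m.1))

open Polynomial Finset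

lemma normR_eq_sum {R : ℝ} {p : Polynomial ℂ} {n : ℕ} (hn : p.natDegree < n) :
    normR R p = ∑ i ∈ range n, ‖p.coeff i‖ * R ^ i := by
  refine Finset.sum_subset (fun i hi => ?_) (fun i _ hi => ?_)
  · exact mem_range.mpr (lt_of_le_of_lt (le_natDegree_of_mem_supp i hi) hn)
  · simp [notMem_support_iff.mp hi]

lemma normR_nonneg {R : ℝ} (hR : 0 ≤ R) (p : Polynomial ℂ) : 0 ≤ normR R p :=
  Finset.sum_nonneg fun i _ => mul_nonneg (norm_nonneg _) (pow_nonneg hR i)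

lemma normR_add_le {R : ℝ} (hR : 0 ≤ R) (p q : Polynomial ℂ) :
    normR R (p + q) ≤ normR R p + normR R q := by
  set n := max (p + q).natDegree (max p.natDegree q.natDegree) + 1 with hn
  rw [normR_eq_sum (p := p + q) (n := n) (by omega),
    normR_eq_sum (p := p) (n := n) (by omega), normR_eq_sum (p := q) (n := n) (by omega),
    ← Finset.sum_add_distrib]
  refine Finset.sum_le_sum fun i _ => ?_
  rw [← add_mul]
  refine mul_le_mul_of_nonneg_right ?_ (pow_nonneg hR i)
  simpa using norm_add_le (p.coeff i) (q.coeff i)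

lemma normR_smul {R : ℝ} (a : ℂ) (p : Polynomial ℂ) :
    normR R (a • p) ≤ ‖a‖ * normR R p := by
  rcases eq_or_ne a 0 with rfl | ha
  · simp [normR]
  have h : (a • p).natDegree < p.natDegree + 1 := Nat.lt_succ_of_le (natDegree_smul_le a p)
  rw [normR_eq_sum h, normR_eq_sum (Nat.lt_succ_self _), Finset.mul_sum]
  refine Finset.sum_le_sum fun i _ => ?_
  simp [coeff_smul, smul_eq_mul, map_mul, mul_assoc, le_refl]

lemma normR_neg {R : ℝ} (p : Polynomial ℂ) : normR R (-p) = normR R p := by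
  simp [normR]

lemma normR_sum_le {R : ℝ} (hR : 0 ≤ R) {ι : Type*} (t : Finset ι) (f : ι → Polynomial ℂ) :
    normR R (∑ i ∈ t, f i) ≤ ∑ i ∈ t, normR R (f i) := by
  classical
  induction t using Finset.cons_induction with
  | empty => simp [normR]
  | cons i t hi ih =>
    rw [Finset.sum_cons, Finset.sum_cons]
    exact le_trans (normR_add_le hR _ _) (by linarith)

lemma normR_derivative_le {R : ℝ} (hR : 0 < R) (p : Polynomial ℂ) :
    normR R (derivative p) ≤ (p.natDegree / R) * normR R p := by
  rcases eq_or_ne p.natDegree 0 with h0 | h0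
  · have : derivative p = 0 := by
      rcases natDegree_eq_zero.mp h0 with ⟨a, rfl⟩; simp
    rw [this]
    simp only [normR, support_zero, Finset.sum_empty]
    positivity
  have hd : (derivative p).natDegree < p.natDegree := natDegree_derivative_lt h0
  have h2 : ∑ i ∈ range p.natDegree, ‖p.coeff (i+1)‖ * R ^ (i+1)
      ≤ ∑ i ∈ range (p.natDegree + 1), ‖p.coeff i‖ * R ^ i := by
    rw [Finset.sum_range_succ']
    have : (0:ℝ) ≤ ‖p.coeff 0‖ * R ^ 0 := by positivity
    linarith
  rw [normR_eq_sum hd, normR_eq_sum (p := p) (n := p.natDegree + 1) (Nat.lt_succ_self _)]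
  have key : ∀ i ∈ range p.natDegree,
      ‖(derivative p).coeff i‖ * R ^ i ≤
      p.natDegree / R * (‖p.coeff (i+1)‖ * R ^ (i+1)) := by
    intro i hi
    rw [coeff_derivative, norm_mul]
    have h1 : ‖(i : ℂ) + 1‖ = (i + 1 : ℝ) := by
      rw [show ((i:ℂ) + 1) = ((i+1 : ℕ) : ℂ) by push_cast; ring, Complex.norm_natCast]
      push_cast; ring
    rw [h1]
    have hle : (i + 1 : ℝ) ≤ p.natDegree := by
      have := mem_range.mp hi; exact_mod_cast this
    have hRR : R ^ (i + 1) = R * R ^ i := by ring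
    rw [hRR]
    have hb := norm_nonneg (p.coeff (i+1))
    calc ‖p.coeff (i + 1)‖ * (i+1:ℝ) * R ^ i
        ≤ ‖p.coeff (i + 1)‖ * (p.natDegree : ℝ) * R ^ i := by
          apply mul_le_mul_of_nonneg_right (mul_le_mul_of_nonneg_left hle hb)
            (le_of_lt (pow_pos hR i))
      _ = (p.natDegree : ℝ) / R * (‖p.coeff (i + 1)‖ * (R * R ^ i)) := by
          field_simp
  calc ∑ i ∈ range p.natDegree, ‖(derivative p).coeff i‖ * R ^ i
      ≤ ∑ i ∈ range p.natDegree, (p.natDegree / R * (‖p.coeff (i+1)‖ * R ^ (i+1))) :=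
        Finset.sum_le_sum key
    _ = p.natDegree / R * ∑ i ∈ range p.natDegree, ‖p.coeff (i+1)‖ * R ^ (i+1) := by
        rw [Finset.mul_sum]
    _ ≤ _ := by
        apply mul_le_mul_of_nonneg_left h2
        positivity

lemma normR_iterate_derivative_le {R : ℝ} (hR : 0 < R) {N : ℝ} (p : Polynomial ℂ)
    (hp : (p.natDegree : ℝ) ≤ N) (k : ℕ) :
    normR R ((⇑derivative)^[k] p) ≤ (N / R) ^ k * normR R p := by
  induction k with
  | zero => simp
  | succ k ih =>
    rw [Function.iterate_succ_apply']
    have hdeg : (((⇑derivative)^[k] p).natDegree : ℝ) ≤ N := by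
      refine le_trans ?_ hp
      have := (natDegree_iterate_derivative p k).trans (Nat.sub_le _ _)
      exact_mod_cast this
    calc normR R (derivative ((⇑derivative)^[k] p))
        ≤ (((⇑derivative)^[k] p).natDegree / R) * normR R ((⇑derivative)^[k] p) :=
          normR_derivative_le hR _
      _ ≤ (N / R) * ((N / R) ^ k * normR R p) := by
          have hN0 : 0 ≤ N := le_trans (by positivity) hp
          have hd2 : (((⇑derivative)^[k] p).natDegree : ℝ) / R ≤ N / R := by gcongr
          apply mul_le_mul hd2 ih (normR_nonneg hR.le _)
          positivity
      _ = (N / R) ^ (k+1) * normR R p := by ring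

noncomputable def Dlin : Module.End ℂ (Polynomial ℂ) := Polynomial.derivative

lemma factor_apply (σ : ℂ) (w : Polynomial ℂ) :
    (Dlin - σ • 1) w = derivative w - σ • w := by
  simp [Dlin]

noncomputable def gInv (σ : ℂ) (b : Polynomial ℂ) : Polynomial ℂ :=
  -(∑ k ∈ range (b.natDegree + 1), (σ⁻¹) ^ (k+1) • (⇑derivative)^[k] b)

lemma factor_solve {σ : ℂ} (hσ : σ ≠ 0) (b : Polynomial ℂ) :
    derivative (gInv σ b) - σ • gInv σ b = b := by
  have hstep : ∀ k : ℕ, σ * σ⁻¹ ^ (k+1) = σ⁻¹ ^ k := by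
    intro k
    rw [pow_succ', ← mul_assoc, mul_inv_cancel₀ hσ, one_mul]
  calc derivative (gInv σ b) - σ • gInv σ b
      = ∑ k ∈ range (b.natDegree+1),
          (σ⁻¹ ^ k • (⇑derivative)^[k] b - σ⁻¹ ^ (k+1) • (⇑derivative)^[k+1] b) := by
        unfold gInv
        rw [map_neg, map_sum, smul_neg, sub_neg_eq_add, Finset.smul_sum, neg_add_eq_sub,
          ← Finset.sum_sub_distrib]
        refine Finset.sum_congr rfl fun k _ => ?_
        rw [map_smul, smul_smul, hstep, ← Function.iterate_succ_apply' derivative]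
    _ = σ⁻¹ ^ 0 • (⇑derivative)^[0] b - σ⁻¹ ^ (b.natDegree+1) • (⇑derivative)^[b.natDegree+1] b :=
        Finset.sum_range_sub' _ _
    _ = b := by
        rw [iterate_derivative_eq_zero (Nat.lt_succ_self _), smul_zero, sub_zero, pow_zero,
          one_smul, Function.iterate_zero_apply]

lemma factor_deg {σ : ℂ} (hσ : σ ≠ 0) (w : Polynomial ℂ) :
    (derivative w - σ • w).degree = w.degree := by
  rcases eq_or_ne w 0 with rfl | hw
  · simp
  have h1 : (σ • w).degree = w.degree := by
    rw [smul_eq_C_mul, degree_C_mul hσ]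
  have h2 : (derivative w).degree < (σ • w).degree := h1 ▸ degree_derivative_lt hw
  rw [degree_sub_eq_right_of_degree_lt h2, h1]

lemma factor_norm {R N : ℝ} (hR : 0 < R) (hN : 0 ≤ N) {K : ℕ} {σ : ℂ} (b : Polynomial ℂ)
    (hb : b.natDegree ≤ K) (hbN : (b.natDegree : ℝ) ≤ N) :
    normR R (gInv σ b) ≤
      (∑ k ∈ range (K+1), ((‖σ‖)⁻¹) ^ (k+1) * (N/R) ^ k) * normR R b := by
  unfold gInv
  rw [normR_neg]
  calc normR R (∑ k ∈ range (b.natDegree + 1), σ⁻¹ ^ (k+1) • (⇑derivative)^[k] b)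
      ≤ ∑ k ∈ range (b.natDegree + 1), normR R (σ⁻¹ ^ (k+1) • (⇑derivative)^[k] b) :=
        normR_sum_le hR.le _ _
    _ ≤ ∑ k ∈ range (b.natDegree + 1), ((‖σ‖)⁻¹) ^ (k+1) * ((N/R) ^ k * normR R b) := by
        refine Finset.sum_le_sum fun k _ => ?_
        calc normR R (σ⁻¹ ^ (k+1) • (⇑derivative)^[k] b)
            ≤ ‖σ⁻¹ ^ (k+1)‖ * normR R ((⇑derivative)^[k] b) := normR_smul _ _
          _ ≤ ((‖σ‖)⁻¹) ^ (k+1) * ((N/R) ^ k * normR R b) := by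
              rw [norm_pow, norm_inv]
              exact mul_le_mul_of_nonneg_left (normR_iterate_derivative_le hR b hbN k)
                (by positivity)
    _ ≤ ∑ k ∈ range (K + 1), ((‖σ‖)⁻¹) ^ (k+1) * ((N/R) ^ k * normR R b) := by
        refine Finset.sum_le_sum_of_subset_of_nonneg
          (Finset.range_subset_range.mpr (by omega)) fun k _ _ => ?_
        have := normR_nonneg hR.le b
        positivity
    _ = (∑ k ∈ range (K+1), ((‖σ‖)⁻¹) ^ (k+1) * (N/R) ^ k) * normR R b := by
        rw [Finset.sum_mul]
        refine Finset.sum_congr rfl fun k _ => by ring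

lemma list_prod_deg (l : List ℂ) (hl : ∀ σ ∈ l, σ ≠ 0) (w : Polynomial ℂ) :
    (((l.map fun σ => Dlin - σ • 1).prod) w).degree = w.degree := by
  induction l generalizing w with
  | nil => simp
  | cons σ l ih =>
    rw [List.map_cons, List.prod_cons, Module.End.mul_apply, factor_apply,
      factor_deg (hl σ (by simp)), ih (fun τ hτ => hl τ (by simp [hτ])) w]

lemma list_solve (l : List ℂ) (hl : ∀ σ ∈ l, σ ≠ 0) {R N : ℝ} (hR : 0 < R) (hN : 0 ≤ N) (K : ℕ)
    (hKN : (K : ℝ) ≤ N) (b : Polynomial ℂ) (hb : b.natDegree ≤ K) :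
    ∃ w : Polynomial ℂ, ((l.map fun σ => Dlin - σ • 1).prod) w = b ∧ w.degree = b.degree ∧
      normR R w ≤
        (l.map fun σ => ∑ k ∈ range (K+1), ((‖σ‖)⁻¹) ^ (k+1) * (N/R) ^ k).prod
          * normR R b := by
  induction l generalizing b with
  | nil => exact ⟨b, by simp, rfl, by simp⟩
  | cons σ l ih =>
    have hσ : σ ≠ 0 := hl σ (by simp)
    have hbN : (b.natDegree : ℝ) ≤ N := le_trans (by exact_mod_cast hb) hKN
    set w₁ := gInv σ b with hw₁def
    have hw₁ : derivative w₁ - σ • w₁ = b := factor_solve hσ b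
    have hdeg₁ : w₁.degree = b.degree := by rw [← hw₁, factor_deg hσ]
    have hnat₁ : w₁.natDegree ≤ K := natDegree_eq_of_degree_eq hdeg₁ ▸ hb
    obtain ⟨w, hw, hdeg, hnorm⟩ := ih (fun τ hτ => hl τ (by simp [hτ])) w₁ hnat₁
    refine ⟨w, ?_, hdeg.trans hdeg₁, ?_⟩
    · rw [List.map_cons, List.prod_cons, Module.End.mul_apply, hw, factor_apply, hw₁]
    · rw [List.map_cons, List.prod_cons]
      have hS : (0:ℝ) ≤ (l.map fun σ => ∑ k ∈ range (K+1),
          ((‖σ‖)⁻¹) ^ (k+1) * (N/R) ^ k).prod := by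
        apply List.prod_nonneg
        intro x hx
        simp only [List.mem_map] at hx
        obtain ⟨τ, _, rfl⟩ := hx
        positivity
      calc normR R w ≤ _ * normR R w₁ := hnorm
        _ ≤ _ * ((∑ k ∈ range (K+1), ((‖σ‖)⁻¹) ^ (k+1) * (N/R) ^ k) * normR R b) :=
            mul_le_mul_of_nonneg_left (factor_norm hR hN b hb hbN) hS
        _ = _ := by ring
noncomputable def L0 (ℓ : ℕ) (A : ℕ → ℂ) : Polynomial ℂ :=
  ∑ j ∈ range (ℓ+1), Polynomial.C (A j) * Polynomial.X ^ j

noncomputable def Qp (ℓ : ℕ) (A : ℕ → ℂ) (μ : ℂ) : Polynomial ℂ :=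
  (L0 ℓ A).comp (Polynomial.X + Polynomial.C μ)

lemma eval_L0 (ℓ : ℕ) (A : ℕ → ℂ) (z : ℂ) :
    (L0 ℓ A).eval z = ∑ j ∈ range (ℓ+1), A j * z ^ j := by
  simp [L0, eval_finset_sum]

lemma coeff_L0 (ℓ : ℕ) (A : ℕ → ℂ) : (L0 ℓ A).coeff ℓ = A ℓ := by
  rw [L0, finset_sum_coeff]
  simp only [coeff_C_mul, coeff_X_pow]
  rw [Finset.sum_eq_single ℓ]
  · simp
  · intro j _ hj; simp [Ne.symm hj]
  · intro h; exact absurd (self_mem_range_succ ℓ) h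

lemma natDegree_L0 {ℓ : ℕ} {A : ℕ → ℂ} (hA : A ℓ ≠ 0) : (L0 ℓ A).natDegree = ℓ := by
  refine le_antisymm ?_ ?_
  · exact natDegree_sum_le_of_forall_le _ _ fun j hj =>
      le_trans (natDegree_C_mul_le _ _) (by simpa using Nat.lt_succ_iff.mp (mem_range.mp hj))
  · exact le_natDegree_of_ne_zero (by rw [coeff_L0]; exact hA)

lemma L0_ne_zero {ℓ : ℕ} {A : ℕ → ℂ} (hA : A ℓ ≠ 0) : L0 ℓ A ≠ 0 := fun h => by
  have := coeff_L0 ℓ A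
  rw [h] at this
  simp at this
  exact hA this.symm

lemma leadingCoeff_L0 {ℓ : ℕ} {A : ℕ → ℂ} (hA : A ℓ ≠ 0) : (L0 ℓ A).leadingCoeff = A ℓ := by
  rw [leadingCoeff, natDegree_L0 hA, coeff_L0]

lemma leadingCoeff_Qp {ℓ : ℕ} {A : ℕ → ℂ} (hA : A ℓ ≠ 0) (μ : ℂ) :
    (Qp ℓ A μ).leadingCoeff = A ℓ := by
  rw [Qp, leadingCoeff_comp (by rw [natDegree_X_add_C]; omega), leadingCoeff_L0 hA,
    leadingCoeff_X_add_C, one_pow, mul_one]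

lemma Qp_ne_zero {ℓ : ℕ} {A : ℕ → ℂ} (hA : A ℓ ≠ 0) (μ : ℂ) : Qp ℓ A μ ≠ 0 := fun h => by
  have := leadingCoeff_Qp hA μ
  rw [h] at this
  exact hA (by simpa using this.symm)

lemma natDegree_Qp {ℓ : ℕ} {A : ℕ → ℂ} (hA : A ℓ ≠ 0) (μ : ℂ) :
    (Qp ℓ A μ).natDegree = ℓ := by
  rw [Qp, natDegree_comp, natDegree_X_add_C, natDegree_L0 hA, mul_one]

lemma card_roots_Qp {ℓ : ℕ} {A : ℕ → ℂ} (hA : A ℓ ≠ 0) (μ : ℂ) :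
    Multiset.card (Qp ℓ A μ).roots = ℓ := by
  rw [(splits_iff_card_roots).mp (IsAlgClosed.splits _), natDegree_Qp hA]

lemma eval_Qp (ℓ : ℕ) (A : ℕ → ℂ) (μ σ : ℂ) :
    (Qp ℓ A μ).eval σ = (L0 ℓ A).eval (σ + μ) := by
  rw [Qp, eval_comp]; simp

lemma roots_Qp_ne_zero {ℓ : ℕ} {A : ℕ → ℂ} (hA : A ℓ ≠ 0) {μ : ℂ}
    (hLμ : (L0 ℓ A).eval μ ≠ 0) {σ : ℂ} (hσ : σ ∈ (Qp ℓ A μ).roots) : σ ≠ 0 := by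
  rintro rfl
  have := (mem_roots (Qp_ne_zero hA μ)).mp hσ
  rw [IsRoot, eval_Qp, zero_add] at this
  exact hLμ this

lemma roots_Qp_mem_L0 {ℓ : ℕ} {A : ℕ → ℂ} (hA : A ℓ ≠ 0) {μ σ : ℂ}
    (hσ : σ ∈ (Qp ℓ A μ).roots) : σ + μ ∈ (L0 ℓ A).roots := by
  rw [mem_roots (L0_ne_zero hA)]
  have := (mem_roots (Qp_ne_zero hA μ)).mp hσ
  rwa [IsRoot, eval_Qp] at this

/-- The operator of the statement equals `aeval Dlin (Qp ℓ A μ)`. -/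
lemma op_eq (ℓ : ℕ) (A : ℕ → ℂ) (μ : ℂ) (w : Polynomial ℂ) :
    ∑ j ∈ range (ℓ+1), A j • (fun v => Polynomial.C μ * v + derivative v)^[j] w
      = (Polynomial.aeval Dlin (Qp ℓ A μ)) w := by
  have hΔ : (Polynomial.aeval Dlin (Polynomial.X + Polynomial.C μ)
      : Module.End ℂ (Polynomial ℂ)) = Dlin + algebraMap ℂ _ μ := by
    rw [map_add, aeval_X, aeval_C]
  have hiter : ∀ (j : ℕ) (v : Polynomial ℂ),
      (fun v => Polynomial.C μ * v + derivative v)^[j] v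
        = ((Dlin + algebraMap ℂ (Module.End ℂ (Polynomial ℂ)) μ) ^ j) v := by
    intro j
    induction j with
    | zero => intro v; simp
    | succ j ih =>
      intro v
      rw [Function.iterate_succ_apply, pow_succ, Module.End.mul_apply, ih]
      congr 1
      rw [LinearMap.add_apply, Module.algebraMap_end_apply, smul_eq_C_mul]
      show Polynomial.C μ * v + derivative v = derivative v + Polynomial.C μ * v
      ring
  rw [Qp, aeval_comp, hΔ, L0, map_sum, LinearMap.sum_apply]
  refine Finset.sum_congr rfl fun j _ => ?_
  rw [map_mul, aeval_C, map_pow, aeval_X, Module.End.mul_apply, Module.algebraMap_end_apply,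
    hiter]
lemma Qp_factor {ℓ : ℕ} {A : ℕ → ℂ} (hA : A ℓ ≠ 0) (μ : ℂ) :
    (Polynomial.aeval Dlin (Qp ℓ A μ) : Module.End ℂ (Polynomial ℂ)) =
      A ℓ • ((Qp ℓ A μ).roots.toList.map fun σ => Dlin - σ • 1).prod := by
  have hfac := (IsAlgClosed.splits (Qp ℓ A μ)).eq_prod_roots
  conv_lhs => rw [hfac, leadingCoeff_Qp hA, ← Multiset.coe_toList (Qp ℓ A μ).roots,
    Multiset.map_coe, Multiset.prod_coe]
  rw [map_mul, aeval_C, map_list_prod, List.map_map, Algebra.smul_def]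
  congr 1
  refine congrArg List.prod (List.map_congr_left fun σ _ => ?_)
  show (Polynomial.aeval Dlin) (Polynomial.X - Polynomial.C σ) = Dlin - σ • 1
  rw [map_sub, aeval_X, aeval_C, Algebra.algebraMap_eq_smul_one]

lemma abs_eval_L0 {ℓ : ℕ} {A : ℕ → ℂ} (hA : A ℓ ≠ 0) (μ : ℂ) :
    ‖(L0 ℓ A).eval μ‖
      = ‖A ℓ‖ * (((Qp ℓ A μ).roots.map (‖·‖)).prod) := by
  have hfac := (IsAlgClosed.splits (Qp ℓ A μ)).eq_prod_roots
  have h0 : (L0 ℓ A).eval μ = (Qp ℓ A μ).eval 0 := by rw [eval_Qp, zero_add]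
  rw [h0]
  conv_lhs => rw [hfac, leadingCoeff_Qp hA]
  rw [eval_mul, eval_C, eval_multiset_prod, norm_mul, ← normHom_apply (α := ℂ) (Multiset.prod _),
    map_multiset_prod,
    Multiset.map_map, Multiset.map_map]
  congr 1
  refine congrArg Multiset.prod (Multiset.map_congr rfl fun σ _ => ?_)
  simp

lemma mu_deg {ℓ : ℕ} {A : ℕ → ℂ} (hA : A ℓ ≠ 0) {μ : ℂ}
    (hLμ : (L0 ℓ A).eval μ ≠ 0) (w : Polynomial ℂ) :
    ((Polynomial.aeval Dlin (Qp ℓ A μ)) w).degree = w.degree := by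
  rw [Qp_factor hA, LinearMap.smul_apply, smul_eq_C_mul, degree_C_mul hA,
    list_prod_deg _ (fun σ hσ => roots_Qp_ne_zero hA hLμ (Multiset.mem_toList.mp hσ))]

lemma mu_inj {ℓ : ℕ} {A : ℕ → ℂ} (hA : A ℓ ≠ 0) {μ : ℂ}
    (hLμ : (L0 ℓ A).eval μ ≠ 0) {w w' : Polynomial ℂ}
    (h : (Polynomial.aeval Dlin (Qp ℓ A μ)) w = (Polynomial.aeval Dlin (Qp ℓ A μ)) w') :
    w = w' := by
  have h2 : ((Polynomial.aeval Dlin (Qp ℓ A μ)) (w - w')).degree = (w - w').degree :=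
    mu_deg hA hLμ _
  rw [map_sub, h, sub_self, degree_zero] at h2
  exact sub_eq_zero.mp (degree_eq_bot.mp h2.symm)

lemma Sprod_nonneg (l : List ℂ) (K : ℕ) (c : ℝ) (hc : 0 ≤ c) :
    0 ≤ (l.map fun σ => ∑ k ∈ range (K+1), ((‖σ‖)⁻¹) ^ (k+1) * c ^ k).prod := by
  apply List.prod_nonneg
  intro x hx
  simp only [List.mem_map] at hx
  obtain ⟨τ, _, rfl⟩ := hx
  positivity

lemma mu_solve {ℓ : ℕ} {A : ℕ → ℂ} (hA : A ℓ ≠ 0) {μ : ℂ}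
    (hLμ : (L0 ℓ A).eval μ ≠ 0) {R N : ℝ} (hR : 0 < R) (hN : 0 ≤ N) (K : ℕ)
    (hKN : (K : ℝ) ≤ N) (b : Polynomial ℂ) (hb : b.natDegree ≤ K) :
    ∃ w, (Polynomial.aeval Dlin (Qp ℓ A μ)) w = b ∧ w.degree = b.degree ∧
      normR R w ≤ (‖A ℓ‖)⁻¹ *
        ((Qp ℓ A μ).roots.toList.map fun σ =>
          ∑ k ∈ range (K+1), ((‖σ‖)⁻¹) ^ (k+1) * (N/R) ^ k).prod * normR R b := by
  set b' := (A ℓ)⁻¹ • b with hb'def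
  have hb'deg : b'.degree = b.degree := by
    rw [hb'def, smul_eq_C_mul, degree_C_mul (inv_ne_zero hA)]
  have hb'nat : b'.natDegree ≤ K := natDegree_eq_of_degree_eq hb'deg ▸ hb
  obtain ⟨w, hw, hdeg, hnorm⟩ := list_solve _
    (fun σ hσ => roots_Qp_ne_zero hA hLμ (Multiset.mem_toList.mp hσ)) hR hN K hKN b' hb'nat
  refine ⟨w, ?_, hdeg.trans hb'deg, ?_⟩
  · rw [Qp_factor hA, LinearMap.smul_apply, hw, hb'def, smul_smul, mul_inv_cancel₀ hA, one_smul]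
  · have hprod := Sprod_nonneg ((Qp ℓ A μ).roots.toList) K (N/R) (by positivity)
    calc normR R w ≤ _ * normR R b' := hnorm
      _ ≤ _ * (‖(A ℓ)⁻¹‖ * normR R b) :=
          mul_le_mul_of_nonneg_left (normR_smul _ _) hprod
      _ = _ := by rw [norm_inv]; ring
lemma geomSumLe {q : ℝ} (hq0 : 0 ≤ q) (hq1 : q < 1) (n : ℕ) :
    ∑ k ∈ range n, q ^ k ≤ (1-q)⁻¹ :=
  calc ∑ k ∈ range n, q ^ k ≤ ∑' k, q ^ k :=
        Summable.sum_le_tsum _ (fun i _ => pow_nonneg hq0 i) (summable_geometric_of_lt_one hq0 hq1)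
    _ = (1-q)⁻¹ := tsum_geometric_of_lt_one hq0 hq1

lemma S_le_geom {c q a : ℝ} (K : ℕ) (hq0 : 0 ≤ q) (hq1 : q < 1) (ha : 0 < a)
    (hc : 0 ≤ c) (h : c ≤ q * a) :
    ∑ k ∈ range (K+1), (a⁻¹) ^ (k+1) * c ^ k ≤ a⁻¹ * (1-q)⁻¹ := by
  have step : ∀ k, (a⁻¹) ^ (k+1) * c ^ k ≤ a⁻¹ * q ^ k := by
    intro k
    rw [pow_succ', mul_assoc]
    refine mul_le_mul_of_nonneg_left ?_ (by positivity)
    rw [← mul_pow]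
    refine pow_le_pow_left₀ (by positivity) ?_ k
    rw [inv_mul_le_iff₀ ha, mul_comm]
    exact h
  calc ∑ k ∈ range (K+1), (a⁻¹) ^ (k+1) * c ^ k ≤ ∑ k ∈ range (K+1), a⁻¹ * q ^ k :=
        Finset.sum_le_sum fun k _ => step k
    _ = a⁻¹ * ∑ k ∈ range (K+1), q ^ k := by rw [Finset.mul_sum]
    _ ≤ a⁻¹ * (1-q)⁻¹ := mul_le_mul_of_nonneg_left (geomSumLe hq0 hq1 _) (by positivity)

lemma list_prod_le_prod (l : List ℂ) (f g : ℂ → ℝ) (h : ∀ σ ∈ l, 0 ≤ f σ ∧ f σ ≤ g σ) :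
    (l.map f).prod ≤ (l.map g).prod := by
  induction l with
  | nil => simp
  | cons σ l ih =>
    rw [List.map_cons, List.prod_cons, List.map_cons, List.prod_cons]
    have h1 := h σ (by simp)
    have hfl : 0 ≤ (l.map f).prod :=
      List.prod_nonneg fun x hx => by
        obtain ⟨τ, hτ, rfl⟩ := List.mem_map.mp hx
        exact (h τ (by simp [hτ])).1
    exact mul_le_mul h1.2 (ih fun τ hτ => h τ (by simp [hτ])) hfl (le_trans h1.1 h1.2)

lemma list_prod_map_mul_const (c : ℝ) (f : ℂ → ℝ) (l : List ℂ) :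
    (l.map fun σ => c * f σ).prod = c ^ l.length * (l.map f).prod := by
  induction l with
  | nil => simp
  | cons σ l ih =>
    rw [List.map_cons, List.prod_cons, ih, List.map_cons, List.prod_cons, List.length_cons]
    ring

lemma list_prod_map_inv (f : ℂ → ℝ) (l : List ℂ) :
    (l.map fun σ => (f σ)⁻¹).prod = ((l.map f).prod)⁻¹ := by
  induction l with
  | nil => simp
  | cons σ l ih =>
    rw [List.map_cons, List.prod_cons, ih, List.map_cons, List.prod_cons, mul_inv]

lemma toList_map_prod (s : Multiset ℂ) (f : ℂ → ℝ) :
    (s.toList.map f).prod = (s.map f).prod := by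
  conv_rhs => rw [← Multiset.coe_toList s]
  rw [Multiset.map_coe, Multiset.prod_coe]

lemma multiset_pow_le_prod {s : Multiset ℝ} {a : ℝ} (ha : 0 ≤ a) (h : ∀ x ∈ s, a ≤ x) :
    a ^ Multiset.card s ≤ s.prod := by
  induction s using Multiset.induction with
  | empty => simp
  | cons x s ih =>
    rw [Multiset.prod_cons, Multiset.card_cons, pow_succ']
    have hx := h x (Multiset.mem_cons_self _ _)
    have hs : a ^ Multiset.card s ≤ s.prod := ih fun y hy => h y (Multiset.mem_cons_of_mem hy)
    exact mul_le_mul hx hs (pow_nonneg ha _) (le_trans ha hx)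

/-- `B0`-style root bound: every root of `Qp` satisfies `|μ| - B0 ≤ |σ|`. -/
lemma root_lower {ℓ : ℕ} {A : ℕ → ℂ} (hA : A ℓ ≠ 0) {μ σ : ℂ}
    (hσ : σ ∈ (Qp ℓ A μ).roots) :
    ‖μ‖ - ((L0 ℓ A).roots.map (‖·‖)).sum ≤ ‖σ‖ := by
  have h1 : σ + μ ∈ (L0 ℓ A).roots := roots_Qp_mem_L0 hA hσ
  have h2 : ‖σ + μ‖ ≤ ((L0 ℓ A).roots.map (‖·‖)).sum :=
    Multiset.single_le_sum (fun x hx => by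
      obtain ⟨τ, _, rfl⟩ := Multiset.mem_map.mp hx; exact norm_nonneg τ) _
      (Multiset.mem_map_of_mem _ h1)
  have h3 : ‖μ‖ ≤ ‖σ + μ‖ + ‖σ‖ := by
    calc ‖μ‖ = ‖(σ + μ) - σ‖ := by ring_nf
      _ ≤ ‖σ + μ‖ + ‖σ‖ := by
          simpa [sub_eq_add_neg] using norm_add_le (σ + μ) (-σ)
  linarith

/-- For `|μ|` beyond the root bound, the product of `S σ` over roots is controlled. -/
lemma prodS_bound {ℓ : ℕ} {A : ℕ → ℂ} (hA : A ℓ ≠ 0) {μ : ℂ}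
    (hLμ : (L0 ℓ A).eval μ ≠ 0) {R N q : ℝ} (K : ℕ)
    (hq0 : 0 ≤ q) (hq1 : q < 1) (hc : 0 ≤ N / R)
    (hgap : ∀ σ ∈ (Qp ℓ A μ).roots, N / R ≤ q * ‖σ‖ ∧ 0 < ‖σ‖) :
    ((Qp ℓ A μ).roots.toList.map fun σ =>
        ∑ k ∈ range (K+1), ((‖σ‖)⁻¹) ^ (k+1) * (N/R) ^ k).prod
      ≤ ((1-q)⁻¹) ^ ℓ * (‖A ℓ‖ / ‖(L0 ℓ A).eval μ‖) := by
  have hmem : ∀ σ ∈ (Qp ℓ A μ).roots.toList, σ ∈ (Qp ℓ A μ).roots :=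
    fun σ hσ => Multiset.mem_toList.mp hσ
  have step : ((Qp ℓ A μ).roots.toList.map fun σ =>
      ∑ k ∈ range (K+1), ((‖σ‖)⁻¹) ^ (k+1) * (N/R) ^ k).prod
      ≤ ((Qp ℓ A μ).roots.toList.map fun σ => (1-q)⁻¹ * (‖σ‖)⁻¹).prod := by
    apply list_prod_le_prod
    intro σ hσ
    obtain ⟨hg, hpos⟩ := hgap σ (hmem σ hσ)
    constructor
    · apply Finset.sum_nonneg
      intro k _
      positivity
    · calc ∑ k ∈ range (K+1), ((‖σ‖)⁻¹) ^ (k+1) * (N/R) ^ k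
          ≤ (‖σ‖)⁻¹ * (1-q)⁻¹ := S_le_geom K hq0 hq1 hpos hc hg
        _ = (1-q)⁻¹ * (‖σ‖)⁻¹ := mul_comm _ _
  refine le_trans step ?_
  rw [list_prod_map_mul_const, Multiset.length_toList, card_roots_Qp hA,
    toList_map_prod _ (fun σ => (‖σ‖)⁻¹)]
  have : ((Qp ℓ A μ).roots.map fun σ => (‖σ‖)⁻¹).prod
      = (((Qp ℓ A μ).roots.map (‖·‖)).prod)⁻¹ := by
    rw [← Multiset.coe_toList (Qp ℓ A μ).roots, Multiset.map_coe, Multiset.map_coe,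
      Multiset.prod_coe, Multiset.prod_coe, list_prod_map_inv]
  rw [this]
  have habs : ((Qp ℓ A μ).roots.map (‖·‖)).prod
      = ‖(L0 ℓ A).eval μ‖ / ‖A ℓ‖ := by
    have hAa : ‖A ℓ‖ ≠ 0 := norm_ne_zero_iff.mpr hA
    rw [abs_eval_L0 hA μ]
    field_simp
  rw [habs, inv_div]

set_option maxHeartbeats 2000000 in
/-- The diagonal operator `L(λ+δ̂)`, acting coefficientwise by `L(λ+⟨m,r⟩+d/dt)`,
is a linear homeomorphism from `H^ℓ` onto `H⁰`: for every `(b_m) ∈ H⁰` there is a unique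
family of polynomial solutions `(v_m)` (vanishing at `m = 0`), it satisfies
`deg v_m = deg b_m ≤ 𝒦|m|`, lies in `H^ℓ`, and `‖(v_m)‖_ℓ ≤ α'·‖(b_m)‖_0`. -/
theorem diagonal_operator_invertible (κ : ℕ) (hκ : 1 ≤ κ) (r : Fin κ → ℂ)
    (hr : ∀ i, 0 < (r i).re) (s 𝒦 : ℝ) (hs : 0 < s) (h𝒦 : 0 ≤ 𝒦)
    (lam : ℂ) (hlam : 0 < lam.re)
    (ℓ : ℕ) (A : ℕ → ℂ) (hA : A ℓ ≠ 0)
    (hL : ∀ m : Fin κ → ℕ, m ≠ 0 →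
      ∑ j ∈ Finset.range (ℓ + 1), A j * (lam + mdot r m) ^ j ≠ 0)
    (θ : ℝ) (hθ : ∀ m : Fin κ → ℕ, m ≠ 0 →
      (msize m : ℝ) ≤ θ * ‖lam + mdot r m‖)
    (R : ℝ) (hR : max 1 (𝒦 * θ) < R) :
    ∃ α' > (0 : ℝ), ∀ b : (Fin κ → ℕ) → Polynomial ℂ, memHJ r s R 𝒦 lam 0 b →
      (∃! v : (Fin κ → ℕ) → Polynomial ℂ, v 0 = 0 ∧ ∀ m : Fin κ → ℕ, m ≠ 0 →
        (∑ j ∈ Finset.range (ℓ + 1), A j • (DeltaOp lam r m)^[j] (v m)) = b m) ∧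
      ∀ v : (Fin κ → ℕ) → Polynomial ℂ,
        (v 0 = 0 ∧ ∀ m : Fin κ → ℕ, m ≠ 0 →
          (∑ j ∈ Finset.range (ℓ + 1), A j • (DeltaOp lam r m)^[j] (v m)) = b m) →
        (∀ m : Fin κ → ℕ, m ≠ 0 → (v m).degree = (b m).degree) ∧
        memHJ r s R 𝒦 lam ℓ v ∧
        normJ r s R 𝒦 lam ℓ v ≤ α' * normJ r s R 𝒦 lam 0 b := by
  classical
  have hR1 : (1:ℝ) < R := lt_of_le_of_lt (le_max_left _ _) hR
  have hR0 : (0:ℝ) < R := by linarith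
  have hKθR : 𝒦 * θ < R := lt_of_le_of_lt (le_max_right _ _) hR
  -- θ > 0
  have hθpos : 0 < θ := by
    have hm : ((fun _ => 1 : Fin κ → ℕ)) ≠ 0 := by
      intro h
      have := congrFun h ⟨0, hκ⟩
      simp at this
    have h1 := hθ _ hm
    have hms : (1:ℝ) ≤ (msize (fun _ => 1 : Fin κ → ℕ) : ℝ) := by
      have h2 : msize (fun _ => 1 : Fin κ → ℕ) = κ := by simp [msize]
      rw [h2]; exact_mod_cast hκ
    nlinarith [norm_nonneg (lam + mdot r (fun _ => 1))]
  have hKθ0 : 0 ≤ 𝒦 * θ := mul_nonneg h𝒦 hθpos.le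
  -- the contraction ratio q
  obtain ⟨q, hqdef⟩ : ∃ x : ℝ, x = (𝒦 * θ / R + 1) / 2 := ⟨_, rfl⟩
  have hratio : 𝒦 * θ / R < 1 := by rw [div_lt_one hR0]; exact hKθR
  have hratio0 : 0 ≤ 𝒦 * θ / R := by positivity
  have hq0 : 0 ≤ q := by rw [hqdef]; linarith
  have hq1 : q < 1 := by rw [hqdef]; linarith
  have hqgt : 𝒦 * θ / R < q := by rw [hqdef]; linarith
  obtain ⟨ε, hεdef⟩ : ∃ x : ℝ, x = q - 𝒦 * θ / R := ⟨_, rfl⟩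
  have hε : 0 < ε := by rw [hεdef]; linarith
  obtain ⟨B0, hB0def⟩ : ∃ x : ℝ, x = ((L0 ℓ A).roots.map (‖·‖)).sum := ⟨_, rfl⟩
  have hB0 : 0 ≤ B0 := hB0def ▸ Multiset.sum_nonneg fun x hx => by
    obtain ⟨τ, _, rfl⟩ := Multiset.mem_map.mp hx; exact norm_nonneg τ
  obtain ⟨μ0, hμ0def⟩ : ∃ x : ℝ, x = max (2*B0 + 1) (q*B0/ε + 1) := ⟨_, rfl⟩
  obtain ⟨α₁, hα₁def⟩ : ∃ x : ℝ,
    x = (2*(1+𝒦*θ)*(1-q)⁻¹)^ℓ * (‖A ℓ‖)⁻¹ := ⟨_, rfl⟩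
  have hAa : (0:ℝ) < ‖A ℓ‖ := norm_pos_iff.mpr hA
  have hLμ : ∀ m : Fin κ → ℕ, m ≠ 0 → (L0 ℓ A).eval (lam + mdot r m) ≠ 0 := by
    intro m hm
    rw [eval_L0]
    exact hL m hm
  -- the per-m bound constant
  obtain ⟨Bf, hBfdef⟩ : ∃ f : (Fin κ → ℕ) → ℝ, f = fun m =>
    (‖lam + mdot r m‖ + 𝒦 * msize m)^ℓ * ((‖A ℓ‖)⁻¹ *
      ((Qp ℓ A (lam + mdot r m)).roots.toList.map fun σ =>
        ∑ k ∈ range (⌊𝒦 * (msize m : ℝ)⌋₊ + 1),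
          ((‖σ‖)⁻¹) ^ (k+1) * ((𝒦 * (msize m : ℝ))/R) ^ k).prod) := ⟨_, rfl⟩
  -- large |μ| : uniform bound α₁
  have hclaim : ∀ m : Fin κ → ℕ, m ≠ 0 → μ0 ≤ ‖lam + mdot r m‖ → Bf m ≤ α₁ := by
    intro m hm hμ
    have hLm : (L0 ℓ A).eval (lam + mdot r m) ≠ 0 := hLμ m hm
    obtain ⟨aμ, haμdef⟩ : ∃ x : ℝ, x = ‖lam + mdot r m‖ := ⟨_, rfl⟩
    have haμ0 : 0 ≤ aμ := haμdef ▸ norm_nonneg _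
    have h1q : (0:ℝ) < 1 - q := by linarith
    rw [← haμdef] at hμ
    have haμ1 : 2*B0 + 1 ≤ aμ := le_trans (hμ0def ▸ le_max_left _ _) hμ
    have haμ2 : q*B0/ε + 1 ≤ aμ := le_trans (hμ0def ▸ le_max_right _ _) hμ
    have hεq : q*B0 ≤ ε * aμ := by
      have h1 : q*B0/ε ≤ aμ := by linarith
      calc q*B0 = (q*B0/ε) * ε := by field_simp
        _ ≤ aμ * ε := mul_le_mul_of_nonneg_right h1 hε.le
        _ = ε * aμ := mul_comm _ _
    have hNa : 𝒦 * (msize m : ℝ) ≤ 𝒦*θ*aμ := by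
      have h1 := hθ m hm
      rw [← haμdef] at h1
      calc 𝒦 * (msize m : ℝ) ≤ 𝒦 * (θ * aμ) := mul_le_mul_of_nonneg_left h1 h𝒦
        _ = 𝒦*θ*aμ := by ring
    have hroot : ∀ σ ∈ (Qp ℓ A (lam + mdot r m)).roots, (aμ - B0) ≤ ‖σ‖ := by
      intro σ hσ
      have := root_lower hA hσ
      rw [← hB0def, ← haμdef] at this
      exact this
    have hgap : ∀ σ ∈ (Qp ℓ A (lam + mdot r m)).roots,
        (𝒦 * (msize m : ℝ))/R ≤ q * ‖σ‖ ∧ 0 < ‖σ‖ := by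
      intro σ hσ
      have h1 := hroot σ hσ
      have hkey : (𝒦 * (msize m : ℝ))/R ≤ q*(aμ - B0) := by
        rw [div_le_iff₀ hR0]
        have h3 := mul_le_mul_of_nonneg_right hεq hR0.le
        have h4 : ε*aμ*R = q*aμ*R - (𝒦*θ/R)*aμ*R := by rw [hεdef]; ring
        have h5 : (𝒦*θ/R)*aμ*R = 𝒦*θ*aμ := by field_simp
        have h6 : q*(aμ-B0)*R = q*aμ*R - q*B0*R := by ring
        nlinarith
      refine ⟨le_trans hkey (mul_le_mul_of_nonneg_left h1 hq0), by linarith⟩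
    have hprodS := prodS_bound hA hLm (R := R) (N := 𝒦 * (msize m : ℝ))
      (⌊𝒦 * (msize m : ℝ)⌋₊) hq0 hq1 (by positivity) hgap
    -- lower bound on |L0.eval μ|
    have hLe0 : 0 < ‖(L0 ℓ A).eval (lam + mdot r m)‖ := norm_pos_iff.mpr hLm
    have haB : (0:ℝ) < aμ - B0 := by linarith
    have hLe : ‖A ℓ‖ * (aμ-B0)^ℓ ≤ ‖(L0 ℓ A).eval (lam + mdot r m)‖ := by
      rw [abs_eval_L0 hA]
      refine mul_le_mul_of_nonneg_left ?_ hAa.le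
      have hcard : Multiset.card (((Qp ℓ A (lam + mdot r m)).roots).map (‖·‖)) = ℓ := by
        rw [Multiset.card_map, card_roots_Qp hA]
      have hple := multiset_pow_le_prod
        (s := ((Qp ℓ A (lam + mdot r m)).roots).map (‖·‖)) haB.le
        (fun x hx => by
          obtain ⟨τ, hτ, rfl⟩ := Multiset.mem_map.mp hx
          exact hroot τ hτ)
      rwa [hcard] at hple
    have hpow : (aμ + 𝒦 * msize m)^ℓ ≤ ((1+𝒦*θ)*aμ)^ℓ := by
      refine pow_le_pow_left₀ (add_nonneg haμ0 (by positivity)) ?_ ℓ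
      have hid : (1+𝒦*θ)*aμ = aμ + 𝒦*θ*aμ := by ring
      linarith
    have hSnn : (0:ℝ) ≤ ((Qp ℓ A (lam + mdot r m)).roots.toList.map fun σ =>
        ∑ k ∈ range (⌊𝒦 * (msize m : ℝ)⌋₊ + 1),
          ((‖σ‖)⁻¹) ^ (k+1) * ((𝒦 * (msize m : ℝ))/R) ^ k).prod :=
      Sprod_nonneg _ _ _ (by positivity)
    have step1 : Bf m ≤ ((1+𝒦*θ)*aμ)^ℓ * ((‖A ℓ‖)⁻¹ *
        (((1-q)⁻¹)^ℓ * (‖A ℓ‖ / ‖(L0 ℓ A).eval (lam + mdot r m)‖))) := by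
      simp only [hBfdef]
      rw [← haμdef]
      refine mul_le_mul hpow (mul_le_mul_of_nonneg_left hprodS (by positivity))
        (mul_nonneg (by positivity) hSnn)
        (pow_nonneg (mul_nonneg (by positivity) haμ0) ℓ)
    have step2 : ((1+𝒦*θ)*aμ)^ℓ * ((‖A ℓ‖)⁻¹ *
        (((1-q)⁻¹)^ℓ * (‖A ℓ‖ / ‖(L0 ℓ A).eval (lam + mdot r m)‖)))
        = ((1+𝒦*θ)*aμ)^ℓ * ((1-q)⁻¹)^ℓ / ‖(L0 ℓ A).eval (lam + mdot r m)‖ := by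
      field_simp
    have step3 : ((1+𝒦*θ)*aμ)^ℓ * ((1-q)⁻¹)^ℓ / ‖(L0 ℓ A).eval (lam + mdot r m)‖
        ≤ ((1+𝒦*θ)*aμ)^ℓ * ((1-q)⁻¹)^ℓ / (‖A ℓ‖ * (aμ-B0)^ℓ) := by
      have hD : (0:ℝ) < ‖A ℓ‖ * (aμ-B0)^ℓ := mul_pos hAa (pow_pos haB ℓ)
      exact div_le_div_of_nonneg_left
        (mul_nonneg (pow_nonneg (mul_nonneg (by positivity) haμ0) ℓ) (by positivity)) hD hLe
    have step4 : ((1+𝒦*θ)*aμ)^ℓ * ((1-q)⁻¹)^ℓ / (‖A ℓ‖ * (aμ-B0)^ℓ) ≤ α₁ := by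
      have hD : (0:ℝ) < ‖A ℓ‖ * (aμ-B0)^ℓ := mul_pos hAa (pow_pos haB ℓ)
      rw [hα₁def, div_le_iff₀ hD]
      have hij : (2*(1+𝒦*θ)*(1-q)⁻¹)^ℓ * (‖A ℓ‖)⁻¹ *
          (‖A ℓ‖ * (aμ-B0)^ℓ) = (2*(1+𝒦*θ)*(1-q)⁻¹*(aμ-B0))^ℓ := by
        rw [mul_pow (2*(1+𝒦*θ)*(1-q)⁻¹) (aμ-B0),
          show (2*(1+𝒦*θ)*(1-q)⁻¹)^ℓ * (‖A ℓ‖)⁻¹ *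
            (‖A ℓ‖ * (aμ-B0)^ℓ) = ((‖A ℓ‖)⁻¹ * ‖A ℓ‖) *
            ((2*(1+𝒦*θ)*(1-q)⁻¹)^ℓ * (aμ-B0)^ℓ) from by ring,
          inv_mul_cancel₀ hAa.ne', one_mul]
      rw [hij, ← mul_pow]
      refine pow_le_pow_left₀
        (mul_nonneg (mul_nonneg (by positivity) haμ0) (by positivity)) ?_ ℓ
      have h2a : aμ ≤ 2*(aμ-B0) := by linarith
      have hcc : 0 ≤ (1+𝒦*θ)*(1-q)⁻¹ := by positivity
      nlinarith [mul_le_mul_of_nonneg_left h2a hcc]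
    calc Bf m ≤ _ := step1
      _ = _ := step2
      _ ≤ _ := step3
      _ ≤ α₁ := step4
  -- finitely many small m
  have hFin : {m : Fin κ → ℕ | m ≠ 0 ∧ ‖lam + mdot r m‖ < μ0}.Finite := by
    have hsub : {m : Fin κ → ℕ | m ≠ 0 ∧ ‖lam + mdot r m‖ < μ0} ⊆
        Set.pi Set.univ (fun _ : Fin κ => Set.Iic ⌊θ * μ0⌋₊) := by
      rintro m ⟨hm, hμ⟩ i _
      have h1 := hθ m hm
      have h2 : (msize m : ℝ) ≤ θ * μ0 :=
        le_trans h1 (mul_le_mul_of_nonneg_left hμ.le hθpos.le)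
      have h3 : msize m ≤ ⌊θ * μ0⌋₊ := Nat.le_floor h2
      have h4 : m i ≤ msize m := Finset.single_le_sum (f := fun j => m j)
        (fun j _ => Nat.zero_le _) (Finset.mem_univ i)
      exact Set.mem_Iic.mpr (le_trans h4 h3)
    exact (Set.Finite.pi fun _ => Set.finite_Iic _).subset hsub
  obtain ⟨c, hc⟩ := (hFin.image Bf).bddAbove
  obtain ⟨α', hα'def⟩ : ∃ x : ℝ, x = max α₁ (max c 1) := ⟨_, rfl⟩
  have hα'pos : 0 < α' := by
    rw [hα'def]
    exact lt_of_lt_of_le one_pos (le_trans (le_max_right c 1) (le_max_right α₁ _))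
  have hBα : ∀ m : Fin κ → ℕ, m ≠ 0 → Bf m ≤ α' := by
    intro m hm
    by_cases hμ : ‖lam + mdot r m‖ < μ0
    · have hmem : Bf m ∈ Bf '' {m : Fin κ → ℕ | m ≠ 0 ∧ ‖lam + mdot r m‖ < μ0} :=
        Set.mem_image_of_mem Bf ⟨hm, hμ⟩
      rw [hα'def]
      exact le_trans (hc hmem) (le_trans (le_max_left c 1) (le_max_right α₁ _))
    · rw [hα'def]
      exact le_trans (hclaim m hm (not_lt.mp hμ)) (le_max_left _ _)
  refine ⟨α', hα'pos, fun b hb => ?_⟩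
  obtain ⟨hb0, hbdeg, hbsum⟩ := hb
  have hbK : ∀ m : Fin κ → ℕ, (b m).natDegree ≤ ⌊𝒦 * (msize m : ℝ)⌋₊ :=
    fun m => Nat.le_floor (hbdeg m)
  have hNn : ∀ m : Fin κ → ℕ, (0:ℝ) ≤ 𝒦 * (msize m : ℝ) := fun m => by positivity
  have hKN : ∀ m : Fin κ → ℕ, ((⌊𝒦 * (msize m : ℝ)⌋₊ : ℝ)) ≤ 𝒦 * (msize m : ℝ) :=
    fun m => Nat.floor_le (hNn m)
  -- the operator in aeval form
  have opEq : ∀ (m : Fin κ → ℕ) (w : Polynomial ℂ),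
      (∑ j ∈ Finset.range (ℓ + 1), A j • (DeltaOp lam r m)^[j] w)
        = (Polynomial.aeval Dlin (Qp ℓ A (lam + mdot r m))) w :=
    fun m w => op_eq ℓ A (lam + mdot r m) w
  -- the solution family
  have hex : ∀ m : {m : Fin κ → ℕ // m ≠ 0},
      ∃ w, (Polynomial.aeval Dlin (Qp ℓ A (lam + mdot r m.1))) w = b m.1 ∧
        w.degree = (b m.1).degree ∧
        normR R w ≤ (‖A ℓ‖)⁻¹ *
          ((Qp ℓ A (lam + mdot r m.1)).roots.toList.map fun σ =>
            ∑ k ∈ range (⌊𝒦 * (msize m.1 : ℝ)⌋₊+1),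
              ((‖σ‖)⁻¹) ^ (k+1) * ((𝒦 * (msize m.1 : ℝ))/R) ^ k).prod
          * normR R (b m.1) :=
    fun m => mu_solve hA (hLμ m.1 m.2) hR0 (hNn m.1) _ (hKN m.1) (b m.1) (hbK m.1)
  choose W hW1 hW2 hW3 using hex
  constructor
  · -- existence and uniqueness
    refine ⟨fun m => if hm : m = 0 then 0 else W ⟨m, hm⟩, ⟨dif_pos rfl, fun m hm => ?_⟩, ?_⟩
    · simp only [dif_neg hm]
      exact (opEq m _).trans (hW1 ⟨m, hm⟩)
    · rintro y ⟨hy0, hy⟩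
      funext m
      by_cases hm : m = 0
      · rw [hm, hy0]
        simp
      · simp only [dif_neg hm]
        refine mu_inj hA (hLμ m hm) ?_
        rw [hW1 ⟨m, hm⟩, ← opEq m (y m), hy m hm]
  · -- estimates for any solution
    rintro v ⟨hv0, hv⟩
    have hveq : ∀ (m : Fin κ → ℕ) (hm : m ≠ 0),
        (Polynomial.aeval Dlin (Qp ℓ A (lam + mdot r m))) (v m) = b m :=
      fun m hm => (opEq m (v m)).symm.trans (hv m hm)
    have hdeg : ∀ (m : Fin κ → ℕ), m ≠ 0 → (v m).degree = (b m).degree := by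
      intro m hm
      rw [← hveq m hm, mu_deg hA (hLμ m hm)]
    -- the key per-m norm estimate
    have hkey : ∀ (m : Fin κ → ℕ) (hm : m ≠ 0),
        (‖lam + mdot r m‖ + 𝒦 * msize m)^ℓ * normR R (v m)
          ≤ α' * normR R (b m) := by
      intro m hm
      have hvw : v m = W ⟨m, hm⟩ :=
        mu_inj hA (hLμ m hm) (by rw [hveq m hm, hW1 ⟨m, hm⟩])
      have hpownn : (0:ℝ) ≤ (‖lam + mdot r m‖ + 𝒦 * msize m)^ℓ := by positivity
      calc (‖lam + mdot r m‖ + 𝒦 * msize m)^ℓ * normR R (v m)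
          ≤ (‖lam + mdot r m‖ + 𝒦 * msize m)^ℓ *
            ((‖A ℓ‖)⁻¹ * ((Qp ℓ A (lam + mdot r m)).roots.toList.map fun σ =>
              ∑ k ∈ range (⌊𝒦 * (msize m : ℝ)⌋₊ + 1),
                ((‖σ‖)⁻¹) ^ (k+1) * ((𝒦 * (msize m : ℝ))/R) ^ k).prod
              * normR R (b m)) := by
            refine mul_le_mul_of_nonneg_left ?_ hpownn
            rw [hvw]
            exact hW3 ⟨m, hm⟩
        _ = Bf m * normR R (b m) := by simp only [hBfdef]; ring
        _ ≤ α' * normR R (b m) :=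
            mul_le_mul_of_nonneg_right (hBα m hm) (normR_nonneg hR0.le _)
    -- termwise comparison for the weighted sums
    have hterm : ∀ m : {m : Fin κ → ℕ // m ≠ 0},
        (‖lam + mdot r m.1‖ + 𝒦 * msize m.1) ^ ℓ /
            ‖Complex.Gamma (mdot r m.1 / (s : ℂ))‖ * normR R (v m.1)
          ≤ α' * ((‖lam + mdot r m.1‖ + 𝒦 * msize m.1) ^ 0 /
            ‖Complex.Gamma (mdot r m.1 / (s : ℂ))‖ * normR R (b m.1)) := by
      intro m
      have hγ : (0:ℝ) ≤ (‖Complex.Gamma (mdot r m.1 / (s : ℂ))‖)⁻¹ := by positivity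
      calc (‖lam + mdot r m.1‖ + 𝒦 * msize m.1) ^ ℓ /
            ‖Complex.Gamma (mdot r m.1 / (s : ℂ))‖ * normR R (v m.1)
          = ((‖lam + mdot r m.1‖ + 𝒦 * msize m.1) ^ ℓ * normR R (v m.1)) *
            (‖Complex.Gamma (mdot r m.1 / (s : ℂ))‖)⁻¹ := by ring
        _ ≤ (α' * normR R (b m.1)) *
            (‖Complex.Gamma (mdot r m.1 / (s : ℂ))‖)⁻¹ :=
            mul_le_mul_of_nonneg_right (hkey m.1 m.2) hγ
        _ = α' * ((‖lam + mdot r m.1‖ + 𝒦 * msize m.1) ^ 0 /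
            ‖Complex.Gamma (mdot r m.1 / (s : ℂ))‖ * normR R (b m.1)) := by
            rw [pow_zero]; ring
    have htermnn : ∀ m : {m : Fin κ → ℕ // m ≠ 0},
        (0:ℝ) ≤ (‖lam + mdot r m.1‖ + 𝒦 * msize m.1) ^ ℓ /
            ‖Complex.Gamma (mdot r m.1 / (s : ℂ))‖ * normR R (v m.1) := by
      intro m
      have := normR_nonneg hR0.le (v m.1)
      positivity
    have hsumR : Summable (fun m : {m : Fin κ → ℕ // m ≠ 0} =>
        α' * ((‖lam + mdot r m.1‖ + 𝒦 * msize m.1) ^ 0 /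
          ‖Complex.Gamma (mdot r m.1 / (s : ℂ))‖ * normR R (b m.1))) :=
      hbsum.mul_left α'
    have hsumL : Summable (fun m : {m : Fin κ → ℕ // m ≠ 0} =>
        (‖lam + mdot r m.1‖ + 𝒦 * msize m.1) ^ ℓ /
          ‖Complex.Gamma (mdot r m.1 / (s : ℂ))‖ * normR R (v m.1)) :=
      Summable.of_nonneg_of_le htermnn hterm hsumR
    refine ⟨hdeg, ⟨hv0, ?_, hsumL⟩, ?_⟩
    · -- degree bounds
      intro m
      by_cases hm : m = 0
      · rw [hm, hv0]
        simp [msize]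
      · rw [natDegree_eq_of_degree_eq (hdeg m hm)]
        exact hbdeg m
    · -- weighted norm estimate
      calc normJ r s R 𝒦 lam ℓ v
          ≤ ∑' m : {m : Fin κ → ℕ // m ≠ 0},
            α' * ((‖lam + mdot r m.1‖ + 𝒦 * msize m.1) ^ 0 /
              ‖Complex.Gamma (mdot r m.1 / (s : ℂ))‖ * normR R (b m.1)) :=
            Summable.tsum_le_tsum hterm hsumL hsumR
        _ = α' * normJ r s R 𝒦 lam 0 b := tsum_mul_left
end
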